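/- For every a > 0 there exists R_a > 0 such that for all s ∈ (0,1) the integral ∫_{|x| ≥ R_a} K̃_s(|x|) e^{-a|x|²} dx is finite. -/

import Mathlib

open Real MeasureTheory

/-- The radial majorant kernel K̃_s on ℝ^N. -/
noncomputable def radKernel (N : ℕ) (s r : ℝ) : ℝ :=
  ∫ t in Set.Ioi (0:ℝ),
    exp (-(exp t * r^2) / (2 * (exp (2 * t) - 1))) /
      (t ^ (s/2 + 1) * (1 - exp (-2 * t)) ^ ((N:ℝ)/2))

lemma exp_ge_pow (x : ℝ) (hx : 0 ≤ x) (k : ℕ) : (x / k) ^ k ≤ exp x := by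
  rcases Nat.eq_zero_or_pos k with hk | hk
  · subst hk; simpa using Real.one_le_exp hx
  · have h1 : (x / k) ≤ exp (x / k) := (Real.add_one_le_exp _).trans' (by linarith)
    calc (x / k) ^ k ≤ (exp (x / k)) ^ k := by
          apply pow_le_pow_left₀ (by positivity) h1
      _ = exp x := by
          rw [← Real.exp_nat_mul]
          congr 1
          field_simp

lemma one_sub_exp_lb {t : ℝ} (ht : 0 < t) (ht1 : t ≤ 1) : t / 4 ≤ 1 - exp (-2 * t) := by
  have h1 : 2 * t + 1 ≤ exp (2 * t) := Real.add_one_le_exp _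
  have h2 : exp (-2 * t) * (exp (2 * t) - 1) = 1 - exp (-2 * t) := by
    rw [mul_sub, ← Real.exp_add, neg_mul, neg_add_cancel, Real.exp_zero, mul_one]
  have h3 : exp (-2 * t) ≥ exp (-2) := exp_le_exp.2 (by linarith)
  have he : exp (2:ℝ) < 8 := by
    have := Real.exp_one_lt_d9
    calc exp 2 = exp 1 * exp 1 := by rw [← Real.exp_add]; norm_num
      _ < 2.7182818286 * 2.7182818286 := by
          apply mul_lt_mul' this.le this (exp_pos 1).le; norm_num
      _ < 8 := by norm_num
  have h4 : exp (-2) > 1/8 := by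
    have huv : exp (-2) * exp 2 = 1 := by rw [← Real.exp_add]; norm_num
    nlinarith [exp_pos (-2:ℝ), exp_pos (2:ℝ)]
  calc t / 4 ≤ exp (-2) * (2 * t) := by nlinarith
    _ ≤ exp (-2 * t) * (2 * t) := by nlinarith
    _ ≤ exp (-2 * t) * (exp (2 * t) - 1) := by nlinarith [exp_pos (-2 * t)]
    _ = 1 - exp (-2 * t) := h2

lemma exponent_lb {t : ℝ} (ht : 0 < t) (ht1 : t ≤ 1) :
    1 / (4 * exp 1 * t) ≤ exp t / (2 * (exp (2 * t) - 1)) := by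
  have h1 : exp (2 * t) - 1 ≤ 2 * t * exp (2 * t) := by
    have huv : exp (-(2*t)) * exp (2*t) = 1 := by rw [← Real.exp_add]; norm_num
    have hv : -(2*t) + 1 ≤ exp (-(2*t)) := Real.add_one_le_exp _
    have hnn : 0 ≤ (exp (-(2*t)) - (1 - 2*t)) * exp (2*t) :=
      mul_nonneg (by linarith) (exp_pos _).le
    nlinarith [exp_pos (2*t)]
  have h2 : (0:ℝ) < 2 * (exp (2 * t) - 1) := by
    have := Real.add_one_le_exp (2 * t); nlinarith
  rw [div_le_div_iff₀ (by positivity) h2]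
  have h3 : exp (2 * t) = exp t * exp t := by rw [← Real.exp_add]; ring_nf
  have h4 : exp t ≤ exp 1 := exp_le_exp.2 ht1
  have h5 : exp t ≥ 1 := Real.one_le_exp ht.le
  -- goal : 1 * (2 * (exp (2*t) - 1)) ≤ exp t * (4 * exp 1 * t)
  calc (1:ℝ) * (2 * (exp (2 * t) - 1)) ≤ 2 * (2 * t * exp (2 * t)) := by nlinarith
    _ = 4 * t * (exp t * exp t) := by rw [h3]; ring
    _ ≤ exp t * (4 * exp 1 * t) := by
          nlinarith [mul_le_mul_of_nonneg_left h4 (by positivity : (0:ℝ) ≤ 4 * t * exp t)]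

lemma core (N : ℕ) {s : ℝ} (hs0 : 0 < s) (hs1 : s < 1) :
    IntegrableOn (fun t : ℝ => exp (-(exp t) / (2 * (exp (2 * t) - 1))) /
      (t ^ (s/2 + 1) * (1 - exp (-2 * t)) ^ ((N:ℝ)/2))) (Set.Ioi (0:ℝ)) := by
  have hmeas : Measurable (fun t : ℝ => exp (-(exp t) / (2 * (exp (2 * t) - 1))) /
      (t ^ (s/2 + 1) * (1 - exp (-2 * t)) ^ ((N:ℝ)/2))) := by fun_prop
  rw [show Set.Ioi (0:ℝ) = Set.Ioc 0 1 ∪ Set.Ioi 1 from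
    (Set.Ioc_union_Ioi_eq_Ioi zero_le_one).symm]
  apply IntegrableOn.union
  · -- small times : bounded by a constant
    set k : ℕ := N + 2 with hk
    apply Integrable.mono' (g := fun _ => (4 * exp 1 * (k:ℝ)) ^ k * 4 ^ N)
      (integrableOn_const measure_Ioc_lt_top.ne)
      hmeas.aestronglyMeasurable.restrict
    filter_upwards [ae_restrict_mem measurableSet_Ioc] with t htm
    obtain ⟨ht0, ht1⟩ := htm
    have hden0 : 0 < 1 - exp (-2 * t) := lt_of_lt_of_le (by positivity) (one_sub_exp_lb ht0 ht1)
    have hden : 0 < t ^ (s/2 + 1) * (1 - exp (-2 * t)) ^ ((N:ℝ)/2) := by positivity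
    rw [Real.norm_eq_abs, abs_of_nonneg (by positivity)]
    -- numerator bound
    have hnum : exp (-(exp t) / (2 * (exp (2 * t) - 1))) ≤ (4 * exp 1 * (k:ℝ)) ^ k * t ^ k := by
      have hE := exponent_lb ht0 ht1
      have h2 : exp (-(exp t) / (2 * (exp (2 * t) - 1))) ≤ exp (-(1 / (4 * exp 1 * t))) := by
        apply exp_le_exp.2
        rw [neg_div]
        exact neg_le_neg hE
      refine h2.trans ?_
      set x : ℝ := 1 / (4 * exp 1 * t) with hx
      have hxpos : 0 < x := by positivity
      have hxk : (0:ℝ) < (x / k) ^ k := by positivity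
      have hle : (x / k) ^ k ≤ exp x := exp_ge_pow x hxpos.le k
      calc exp (-x) = (exp x)⁻¹ := Real.exp_neg x
        _ ≤ ((x / k) ^ k)⁻¹ := by
            apply inv_anti₀ hxk hle
        _ = ((x / k)⁻¹) ^ k := by rw [inv_pow]
        _ = (4 * exp 1 * (k:ℝ) * t) ^ k := by
            congr 1
            rw [hx]
            field_simp
        _ = (4 * exp 1 * (k:ℝ)) ^ k * t ^ k := by rw [mul_pow]
    -- denominator bound
    have hd1 : t ^ (2:ℝ) ≤ t ^ (s/2 + 1) :=
      rpow_le_rpow_of_exponent_ge ht0 ht1 (by linarith)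
    have hNhalf : (N:ℝ)/2 ≤ (N:ℝ) := by
      have : (0:ℝ) ≤ (N:ℝ) := Nat.cast_nonneg N
      linarith
    have hd2 : ((t/4):ℝ) ^ (N:ℝ) ≤ (1 - exp (-2 * t)) ^ ((N:ℝ)/2) := by
      calc ((t/4):ℝ) ^ (N:ℝ) ≤ (t/4) ^ ((N:ℝ)/2) :=
            rpow_le_rpow_of_exponent_ge (by positivity) (by linarith) hNhalf
        _ ≤ (1 - exp (-2 * t)) ^ ((N:ℝ)/2) :=
            rpow_le_rpow (by positivity) (one_sub_exp_lb ht0 ht1) (by positivity)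
    have hd : t ^ 2 * (t/4) ^ N ≤ t ^ (s/2 + 1) * (1 - exp (-2 * t)) ^ ((N:ℝ)/2) := by
      have e1 : t ^ (2:ℝ) = t ^ 2 := by
        rw [show ((2:ℝ)) = ((2:ℕ):ℝ) by norm_num, rpow_natCast]
      have e2 : ((t/4):ℝ) ^ (N:ℝ) = (t/4) ^ N := rpow_natCast _ N
      calc t ^ 2 * (t/4) ^ N = t ^ (2:ℝ) * ((t/4):ℝ) ^ (N:ℝ) := by rw [e1, e2]
        _ ≤ _ := mul_le_mul hd1 hd2 (by positivity) (rpow_nonneg ht0.le _)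
    have hden2 : (0:ℝ) < t ^ 2 * (t/4) ^ N := by positivity
    calc exp (-(exp t) / (2 * (exp (2 * t) - 1))) /
          (t ^ (s/2 + 1) * (1 - exp (-2 * t)) ^ ((N:ℝ)/2))
        ≤ ((4 * exp 1 * (k:ℝ)) ^ k * t ^ k) / (t ^ 2 * (t/4) ^ N) :=
          div_le_div₀ (by positivity) hnum hden2 hd
      _ = (4 * exp 1 * (k:ℝ)) ^ k * 4 ^ N := by
          rw [hk]
          rw [div_pow]
          have ht0' : t ≠ 0 := ht0.ne'
          field_simp
          ring
  · -- large times : dominated by t ^ (-(s/2+1)) up to constant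
    have hc : (0:ℝ) < 1 - exp (-2) := by
      have h : exp (-2:ℝ) < 1 := exp_lt_one_iff.2 (by norm_num)
      linarith
    have hint : IntegrableOn (fun t : ℝ => t ^ (-(s/2 + 1)) / ((1 - exp (-2)) ^ ((N:ℝ)/2)))
        (Set.Ioi 1) :=
      (integrableOn_Ioi_rpow_of_lt (by linarith) one_pos).div_const _
    apply Integrable.mono' hint hmeas.aestronglyMeasurable.restrict
    filter_upwards [ae_restrict_mem measurableSet_Ioi] with t ht
    have ht0 : (0:ℝ) < t := lt_trans one_pos ht
    have h1 : 1 - exp (-2:ℝ) ≤ 1 - exp (-2 * t) := by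
      have htt : (1:ℝ) < t := Set.mem_Ioi.1 ht
      have : exp (-2 * t) ≤ exp (-2) := exp_le_exp.2 (by linarith)
      linarith
    have hden0 : (0:ℝ) < 1 - exp (-2 * t) := lt_of_lt_of_le hc h1
    rw [Real.norm_eq_abs, abs_of_nonneg (by positivity)]
    have hexp2t : (0:ℝ) < exp (2 * t) - 1 := by
      have := Real.add_one_le_exp (2 * t); linarith
    have hnum : exp (-(exp t) / (2 * (exp (2 * t) - 1))) ≤ 1 := by
      apply exp_le_one_iff.2
      rw [neg_div]
      simp only [neg_nonpos]
      positivity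
    have hDle : t ^ (s/2 + 1) * (1 - exp (-2:ℝ)) ^ ((N:ℝ)/2) ≤
        t ^ (s/2 + 1) * (1 - exp (-2 * t)) ^ ((N:ℝ)/2) :=
      mul_le_mul_of_nonneg_left (rpow_le_rpow hc.le h1 (by positivity))
        (rpow_nonneg ht0.le _)
    calc exp (-(exp t) / (2 * (exp (2 * t) - 1))) /
          (t ^ (s/2 + 1) * (1 - exp (-2 * t)) ^ ((N:ℝ)/2))
        ≤ 1 / (t ^ (s/2 + 1) * (1 - exp (-2:ℝ)) ^ ((N:ℝ)/2)) := by
          apply div_le_div₀ (by norm_num) hnum _ hDle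
          positivity
      _ = t ^ (-(s/2 + 1)) / ((1 - exp (-2)) ^ ((N:ℝ)/2)) := by
          rw [one_div, mul_inv, rpow_neg ht0.le]
          ring

lemma gauss_integrable (N : ℕ) {a : ℝ} (ha : 0 < a) :
    Integrable (fun v : EuclideanSpace ℝ (Fin N) => exp (-a * ‖v‖^2)) := by
  have h := (GaussianFourier.integrable_cexp_neg_mul_sq_norm_add_of_euclideanSpace
    (b := (a:ℂ)) (by simpa using ha) 0 (0 : EuclideanSpace ℝ (Fin N))).norm
  apply h.congr
  filter_upwards with v
  simp [Complex.norm_exp]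
  left
  norm_cast

theorem radKernel_integrable_far' (N : ℕ) (a : ℝ) (ha : 0 < a) :
    ∀ s ∈ Set.Ioo (0:ℝ) 1,
      IntegrableOn (fun x : EuclideanSpace ℝ (Fin N) =>
          (∫ t in Set.Ioi (0:ℝ), exp (-(exp t * ‖x‖^2) / (2 * (exp (2 * t) - 1))) /
            (t ^ (s/2 + 1) * (1 - exp (-2 * t)) ^ ((N:ℝ)/2))) * exp (-a * ‖x‖^2))
        {x : EuclideanSpace ℝ (Fin N) | 1 ≤ ‖x‖} := by
  rintro s ⟨hs0, hs1⟩
  have hS : MeasurableSet {x : EuclideanSpace ℝ (Fin N) | 1 ≤ ‖x‖} :=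
    (isClosed_le continuous_const continuous_norm).measurableSet
  set μ := volume.restrict {x : EuclideanSpace ℝ (Fin N) | 1 ≤ ‖x‖} with hμ
  have hFmeas : Measurable (fun p : (EuclideanSpace ℝ (Fin N)) × ℝ =>
      (exp (-(exp p.2 * ‖p.1‖^2) / (2 * (exp (2 * p.2) - 1))) /
        (p.2 ^ (s/2 + 1) * (1 - exp (-2 * p.2)) ^ ((N:ℝ)/2))) * exp (-a * ‖p.1‖^2)) := by
    fun_prop
  have hgauss : Integrable (fun v : EuclideanSpace ℝ (Fin N) => exp (-a * ‖v‖^2)) :=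
    gauss_integrable N ha
  -- per-t integrability in x
  have hcond1' : ∀ t ∈ Set.Ioi (0:ℝ), Integrable (fun x : EuclideanSpace ℝ (Fin N) =>
      (exp (-(exp t * ‖x‖^2) / (2 * (exp (2 * t) - 1))) /
        (t ^ (s/2 + 1) * (1 - exp (-2 * t)) ^ ((N:ℝ)/2))) * exp (-a * ‖x‖^2)) μ := by
    intro t ht
    have ht0 : (0:ℝ) < t := ht
    have hden0 : (0:ℝ) < 1 - exp (-2 * t) := by
      have : exp (-2 * t) < 1 := exp_lt_one_iff.2 (by linarith)
      linarith
    have hden : 0 < t ^ (s/2 + 1) * (1 - exp (-2 * t)) ^ ((N:ℝ)/2) := by positivity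
    have hexp2t : (0:ℝ) < exp (2 * t) - 1 := by
      have := Real.add_one_le_exp (2 * t); linarith
    apply Integrable.mono'
      (g := fun x => exp (-a * ‖x‖^2) / (t ^ (s/2 + 1) * (1 - exp (-2 * t)) ^ ((N:ℝ)/2)))
      ((hgauss.div_const _).restrict)
      ((hFmeas.comp (measurable_id.prodMk measurable_const)).aestronglyMeasurable)
    filter_upwards with x
    simp only [Function.comp_apply, id_eq]
    rw [Real.norm_eq_abs, abs_of_nonneg (by positivity)]
    have h1 : exp (-(exp t * ‖x‖^2) / (2 * (exp (2 * t) - 1))) ≤ 1 := by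
      apply exp_le_one_iff.2
      rw [neg_div]
      simp only [neg_nonpos]
      positivity
    rw [div_mul_eq_mul_div]
    apply div_le_div₀ (by positivity) _ hden le_rfl
    exact mul_le_of_le_one_left (exp_pos _).le h1
  have hcond1 : ∀ᵐ t ∂(volume.restrict (Set.Ioi (0:ℝ))),
      Integrable (fun x : EuclideanSpace ℝ (Fin N) =>
      (exp (-(exp t * ‖x‖^2) / (2 * (exp (2 * t) - 1))) /
        (t ^ (s/2 + 1) * (1 - exp (-2 * t)) ^ ((N:ℝ)/2))) * exp (-a * ‖x‖^2)) μ := by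
    filter_upwards [ae_restrict_mem measurableSet_Ioi] with t ht using hcond1' t ht
  -- bound for the iterated integral
  have hcond2 : Integrable (fun t => ∫ x, ‖(exp (-(exp t * ‖x‖^2) / (2 * (exp (2 * t) - 1))) /
        (t ^ (s/2 + 1) * (1 - exp (-2 * t)) ^ ((N:ℝ)/2))) * exp (-a * ‖x‖^2)‖ ∂μ)
      (volume.restrict (Set.Ioi (0:ℝ))) := by
    apply Integrable.mono' (((core N hs0 hs1).mul_const
      (∫ x : EuclideanSpace ℝ (Fin N), exp (-a * ‖x‖^2))))
      ((hFmeas.norm.stronglyMeasurable.integral_prod_left').aestronglyMeasurable)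
    filter_upwards [ae_restrict_mem measurableSet_Ioi] with t ht
    have ht0 : (0:ℝ) < t := ht
    have hden0 : (0:ℝ) < 1 - exp (-2 * t) := by
      have : exp (-2 * t) < 1 := exp_lt_one_iff.2 (by linarith)
      linarith
    have hden : 0 < t ^ (s/2 + 1) * (1 - exp (-2 * t)) ^ ((N:ℝ)/2) := by positivity
    have hexp2t : (0:ℝ) < exp (2 * t) - 1 := by
      have := Real.add_one_le_exp (2 * t); linarith
    set Ct : ℝ := exp (-(exp t) / (2 * (exp (2 * t) - 1))) /
      (t ^ (s/2 + 1) * (1 - exp (-2 * t)) ^ ((N:ℝ)/2)) with hCt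
    have hCtpos : 0 ≤ Ct := by positivity
    rw [Real.norm_eq_abs, abs_of_nonneg (integral_nonneg fun x => norm_nonneg _)]
    have hint1 : Integrable (fun x : EuclideanSpace ℝ (Fin N) =>
        ‖(exp (-(exp t * ‖x‖^2) / (2 * (exp (2 * t) - 1))) /
        (t ^ (s/2 + 1) * (1 - exp (-2 * t)) ^ ((N:ℝ)/2))) * exp (-a * ‖x‖^2)‖ ) μ :=
      (hcond1' t ht).norm
    have hint2 : Integrable (fun x : EuclideanSpace ℝ (Fin N) =>
        Ct * exp (-a * ‖x‖^2)) μ := (hgauss.const_mul _).restrict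
    calc (∫ x, ‖(exp (-(exp t * ‖x‖^2) / (2 * (exp (2 * t) - 1))) /
          (t ^ (s/2 + 1) * (1 - exp (-2 * t)) ^ ((N:ℝ)/2))) * exp (-a * ‖x‖^2)‖ ∂μ)
        ≤ ∫ x, Ct * exp (-a * ‖x‖^2) ∂μ := by
          apply integral_mono_ae hint1 hint2
          filter_upwards [ae_restrict_mem hS] with x hx
          have hx1 : (1:ℝ) ≤ ‖x‖ := hx
          rw [Real.norm_eq_abs, abs_of_nonneg (by positivity), hCt, div_mul_eq_mul_div,
            div_mul_eq_mul_div]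
          apply div_le_div₀ (by positivity) _ hden le_rfl
          apply mul_le_mul_of_nonneg_right _ (exp_pos _).le
          apply exp_le_exp.2
          rw [neg_div, neg_div]
          apply neg_le_neg
          have hsq : (1:ℝ) ≤ ‖x‖^2 := by nlinarith [norm_nonneg x]
          have hxx : exp t ≤ exp t * ‖x‖^2 := by nlinarith [exp_pos t]
          exact (div_le_div_iff_of_pos_right (by positivity)).2 hxx
      _ = Ct * ∫ x, exp (-a * ‖x‖^2) ∂μ := integral_const_mul Ct _
      _ ≤ Ct * ∫ x : EuclideanSpace ℝ (Fin N), exp (-a * ‖x‖^2) := by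
          apply mul_le_mul_of_nonneg_left _ hCtpos
          apply setIntegral_le_integral hgauss
          filter_upwards with x using (exp_pos _).le
      _ = _ := rfl
  have hprod : Integrable (fun p : (EuclideanSpace ℝ (Fin N)) × ℝ =>
      (exp (-(exp p.2 * ‖p.1‖^2) / (2 * (exp (2 * p.2) - 1))) /
        (p.2 ^ (s/2 + 1) * (1 - exp (-2 * p.2)) ^ ((N:ℝ)/2))) * exp (-a * ‖p.1‖^2))
      (μ.prod (volume.restrict (Set.Ioi (0:ℝ)))) :=
    (integrable_prod_iff' hFmeas.aestronglyMeasurable).2 ⟨hcond1, hcond2⟩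
  have hres := hprod.integral_prod_left
  apply hres.congr
  filter_upwards with x
  exact integral_mul_const _ _

theorem radKernel_integrable_far (N : ℕ) (a : ℝ) (ha : 0 < a) :
    ∃ Ra : ℝ, 0 < Ra ∧ ∀ s ∈ Set.Ioo (0:ℝ) 1,
      IntegrableOn (fun x : EuclideanSpace ℝ (Fin N) => radKernel N s ‖x‖ * exp (-a * ‖x‖^2))
        {x : EuclideanSpace ℝ (Fin N) | Ra ≤ ‖x‖} := by
  exact ⟨1, one_pos, fun s hs => radKernel_integrable_far' N a ha s hs⟩
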